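/- Let E ⊆ ω₂ × ω₂ be a symmetric relation that is not representable by sets of naturals, i.e. there is no φ : ω₂ → P(ℕ) with (α,β) ∈ E ↔ φ(α) ∩ φ(β) infinite. Then there is no map ψ : ω₂ → P(ℚ²) assigning to each α a sequence of rational open intervals whose union O_α satisfies: (α,β) ∈ E iff O_α ∩ O_β is unbounded in [0,∞). More precisely: if the assignment α ↦ O_α (each O_α a union of countably many rational intervals (a_n, b_n) with b_n < a_{n+1}) satisfied the equivalence '(α,β) ∈ E ↔ O_α ∩ O_β unbounded in [0,∞)', then E would be representable by sets of naturals via a coding, giving a contradiction. -/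

import Mathlib

open Set Cardinal

/-- The set of ordinals below `ω₂`. -/
noncomputable def Omega2 : Type 1 := {o : Ordinal // o < (Cardinal.aleph 2).ord}

noncomputable section Stmt15Aux

open Classical Encodable

/-- The open set determined by an interval sequence. -/
def S15.Oset (f g : ℕ → ℚ) : Set ℝ := ⋃ n, Ioo ((f n : ℝ)) ((g n : ℝ))

/-- Validity of the interval sequence. -/
def S15.Valid (f g : ℕ → ℚ) : Prop := (∀ n, f n < g n) ∧ ∀ n, g n < f (n + 1)

/-- The `k`-th window `(k, k+2)`. -/
def S15.win (k : ℕ) : Set ℝ := Ioo (k : ℝ) ((k : ℝ) + 2)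

/-- Indices of intervals meeting the `k`-th window. -/
def S15.idx (f g : ℕ → ℚ) (k : ℕ) : Set ℕ :=
  {m | (f m : ℝ) < (k : ℝ) + 2 ∧ (k : ℝ) < (g m : ℝ)}

/-- The finite trace data of the set on the `k`-th window. -/
def S15.trd (f g : ℕ → ℚ) (k : ℕ) : Finset (ℚ × ℚ) :=
  if h : (S15.idx f g k).Finite then
    h.toFinset.image (fun m => (max (f m) (k : ℚ), min (g m) ((k : ℚ) + 2)))
  else ∅

/-- A boolean fingerprint of the pair of sequences. -/
def S15.xb (f g : ℕ → ℚ) (i : ℕ) : Bool :=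
  if (∃ n, i = Nat.pair n (Encodable.encode (f n, g n))) then true else false

/-- Prefix of the fingerprint of length `ℓ`, as a list. -/
def S15.pre (f g : ℕ → ℚ) (ℓ : ℕ) : List Bool := List.ofFn (fun i : Fin ℓ => S15.xb f g i)

/-- The code type. -/
abbrev S15.Code := ℕ × Finset (ℚ × ℚ) × List Bool

/-- Length bound parameter. -/
def S15.L (k : ℕ) (D : Finset (ℚ × ℚ)) : ℕ := Encodable.encode (k, D)

/-- Supply codes. -/
def S15.SUP (f g : ℕ → ℚ) : Set S15.Code :=
  {c | c.2.1 = S15.trd f g c.1 ∧ (S15.Oset f g ∩ S15.win c.1).Nonempty ∧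
    c.2.2.length = S15.L c.1 c.2.1}

/-- Adopted codes. -/
def S15.AD (f g : ℕ → ℚ) : Set S15.Code :=
  {c | ∃ f' g', S15.Valid f' g' ∧ ¬ BddAbove (S15.Oset f' g') ∧
    ¬ BddAbove (S15.Oset f g ∩ S15.Oset f' g') ∧
    c.2.1 = S15.trd f' g' c.1 ∧
    (S15.Oset f g ∩ S15.Oset f' g' ∩ S15.win c.1).Nonempty ∧
    c.2.2 = S15.pre f g (S15.L c.1 c.2.1)}

def S15.Phi (f g : ℕ → ℚ) : Set S15.Code := S15.SUP f g ∪ S15.AD f g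

/-- The representing set of naturals. -/
def S15.phiFun (f g : ℕ → ℚ) : Set ℕ :=
  if ¬ BddAbove (S15.Oset f g) then Encodable.encode '' S15.Phi f g else ∅

namespace S15

lemma valid_strictMono {f g : ℕ → ℚ} (h : Valid f g) : StrictMono f :=
  strictMono_nat_of_lt_succ (fun n => (h.1 n).trans (h.2 n))

lemma bddAbove_of_lt {f g : ℕ → ℚ} (h : Valid f g) {c : ℚ} (hc : ∀ m, f m < c) :
    BddAbove (Oset f g) := by
  refine BddAbove.mono (t := Iio ((c : ℚ) : ℝ)) ?_ bddAbove_Iio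
  rintro x hx
  simp only [Oset, mem_iUnion, mem_Ioo] at hx
  obtain ⟨m, hm1, hm2⟩ := hx
  have : g m < c := (h.2 m).trans (hc (m + 1))
  have : (g m : ℝ) < (c : ℝ) := by exact_mod_cast this
  exact lt_trans hm2 this

lemma exists_ge {f g : ℕ → ℚ} (h : Valid f g) (hu : ¬ BddAbove (Oset f g)) (c : ℚ) :
    ∃ m₀, ∀ m, m₀ ≤ m → c ≤ f m := by
  by_contra hcon
  push_neg at hcon
  apply hu
  apply bddAbove_of_lt h (c := c)
  intro m
  by_contra hmc
  push_neg at hmc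
  obtain ⟨m', hm', hfm'⟩ := hcon m
  exact absurd (hmc.trans ((valid_strictMono h).monotone hm')) (not_le.mpr hfm')

lemma idx_finite {f g : ℕ → ℚ} (h : Valid f g) (hu : ¬ BddAbove (Oset f g)) (k : ℕ) :
    (idx f g k).Finite := by
  obtain ⟨m₀, hm₀⟩ := exists_ge h hu ((k : ℚ) + 2)
  apply (Set.finite_Iio m₀).subset
  intro m hm
  by_contra hge
  have hge' : m₀ ≤ m := not_lt.mp (fun hlt => hge hlt)
  have h1 : ((k : ℚ) + 2 : ℚ) ≤ f m := hm₀ m hge'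
  have h2 : (f m : ℝ) < (k : ℝ) + 2 := hm.1
  have : ((k : ℝ) + 2) ≤ (f m : ℝ) := by exact_mod_cast h1
  linarith

lemma mem_trd {f g : ℕ → ℚ} (h : Valid f g) (hu : ¬ BddAbove (Oset f g)) (k : ℕ)
    {p : ℚ × ℚ} :
    p ∈ trd f g k ↔ ∃ m ∈ idx f g k, p = (max (f m) (k : ℚ), min (g m) ((k : ℚ) + 2)) := by
  rw [trd, dif_pos (idx_finite h hu k)]
  simp only [Finset.mem_image, Set.Finite.mem_toFinset]
  constructor
  · rintro ⟨m, hm, rfl⟩; exact ⟨m, hm, rfl⟩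
  · rintro ⟨m, hm, rfl⟩; exact ⟨m, hm, rfl⟩

/-- Key lemma: the trace data determines the window trace. -/
lemma trd_union {f g : ℕ → ℚ} (h : Valid f g) (hu : ¬ BddAbove (Oset f g)) (k : ℕ) :
    (⋃ p ∈ trd f g k, Ioo ((p.1 : ℝ)) ((p.2 : ℝ))) = Oset f g ∩ win k := by
  ext x
  simp only [mem_iUnion, exists_prop, mem_inter_iff, Oset, win, mem_Ioo]
  constructor
  · rintro ⟨p, hp, hx1, hx2⟩
    rw [mem_trd h hu] at hp
    obtain ⟨m, hm, rfl⟩ := hp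
    simp only at hx1 hx2
    have e1 : ((max (f m) (k : ℚ) : ℚ) : ℝ) = max ((f m : ℝ)) ((k : ℝ)) := by
      push_cast [Rat.cast_max]; ring_nf
    have e2 : ((min (g m) ((k : ℚ) + 2) : ℚ) : ℝ) = min ((g m : ℝ)) ((k : ℝ) + 2) := by
      push_cast [Rat.cast_min]; ring_nf
    rw [e1] at hx1
    rw [e2] at hx2
    constructor
    · exact ⟨m, lt_of_le_of_lt (le_max_left _ _) hx1,
        lt_of_lt_of_le hx2 (min_le_left _ _)⟩
    · exact ⟨lt_of_le_of_lt (le_max_right _ _) hx1,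
        lt_of_lt_of_le hx2 (min_le_right _ _)⟩
  · rintro ⟨⟨m, hm1, hm2⟩, hw1, hw2⟩
    have hmidx : m ∈ idx f g k := ⟨lt_trans hm1 hw2, lt_trans hw1 hm2⟩
    refine ⟨(max (f m) (k : ℚ), min (g m) ((k : ℚ) + 2)), ?_, ?_, ?_⟩
    · rw [mem_trd h hu]; exact ⟨m, hmidx, rfl⟩
    · simp only
      have e1 : ((max (f m) (k : ℚ) : ℚ) : ℝ) = max ((f m : ℝ)) ((k : ℝ)) := by
        push_cast [Rat.cast_max]; ring_nf
      rw [e1]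
      exact max_lt hm1 hw1
    · simp only
      have e2 : ((min (g m) ((k : ℚ) + 2) : ℚ) : ℝ) = min ((g m : ℝ)) ((k : ℝ) + 2) := by
        push_cast [Rat.cast_min]; ring_nf
      rw [e2]
      exact lt_min hm2 hw2

lemma window_exists {S : Set ℝ} (hu : ¬ BddAbove S) (k₀ : ℕ) :
    ∃ k, k₀ ≤ k ∧ (S ∩ win k).Nonempty := by
  have : ∃ x ∈ S, ((k₀ : ℝ) + 1) < x := by
    by_contra hcon
    push_neg at hcon
    exact hu ⟨(k₀ : ℝ) + 1, fun y hy => hcon y hy⟩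
  obtain ⟨x, hxS, hx⟩ := this
  have hx0 : (0 : ℝ) ≤ x := le_trans (by positivity) hx.le
  have hc1 : x ≤ (⌈x⌉₊ : ℝ) := Nat.le_ceil x
  have hc2 : (⌈x⌉₊ : ℝ) < x + 1 := Nat.ceil_lt_add_one hx0
  have hcge : k₀ + 1 ≤ ⌈x⌉₊ := by
    have h4 : ((k₀ + 1 : ℕ) : ℝ) < (⌈x⌉₊ : ℝ) := by
      push_cast
      linarith
    exact_mod_cast h4.le
  refine ⟨⌈x⌉₊ - 1, ?_, x, hxS, ?_, ?_⟩
  · omega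
  · have hcast : ((⌈x⌉₊ - 1 : ℕ) : ℝ) = (⌈x⌉₊ : ℝ) - 1 := by
      have h1 : 1 ≤ ⌈x⌉₊ := by omega
      push_cast [Nat.cast_sub h1]
      ring
    rw [hcast]
    linarith
  · have hcast : ((⌈x⌉₊ - 1 : ℕ) : ℝ) = (⌈x⌉₊ : ℝ) - 1 := by
      have h1 : 1 ≤ ⌈x⌉₊ := by omega
      push_cast [Nat.cast_sub h1]
      ring
    rw [hcast]
    linarith

lemma list_length_finite (n : ℕ) : {l : List Bool | l.length = n}.Finite := by
  induction n with
  | zero =>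
    apply Set.Finite.subset (Set.finite_singleton ([] : List Bool))
    intro l hl
    simp only [mem_setOf_eq, List.length_eq_zero_iff] at hl
    simp [hl]
  | succ n ih =>
    apply Set.Finite.subset (Set.Finite.image2 List.cons Set.finite_univ ih)
    intro l hl
    simp only [mem_setOf_eq] at hl
    match l, hl with
    | x :: t, hl =>
      exact Set.mem_image2_of_mem (mem_univ x) (by simpa using hl)

lemma encode_le_finite (X : Type*) [Encodable X] (N : ℕ) :
    {x : X | Encodable.encode x ≤ N}.Finite := by
  apply Set.Finite.of_finite_image (f := Encodable.encode)
  · exact (Set.finite_Iic N).subset (by rintro y ⟨x, hx, rfl⟩; exact hx)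
  · exact Encodable.encode_injective.injOn

lemma xb_true_iff (f g : ℕ → ℚ) (i : ℕ) :
    xb f g i = true ↔ ∃ n, i = Nat.pair n (Encodable.encode (f n, g n)) := by
  unfold xb
  by_cases h : ∃ n, i = Nat.pair n (Encodable.encode (f n, g n))
  · rw [if_pos h]; exact ⟨fun _ => h, fun _ => rfl⟩
  · rw [if_neg h]; exact ⟨fun hc => absurd hc (by decide), fun hc => absurd hc h⟩

lemma phiFun_pos {f g : ℕ → ℚ} (h : ¬ BddAbove (Oset f g)) :
    phiFun f g = Encodable.encode '' Phi f g := if_pos h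

lemma phiFun_neg {f g : ℕ → ℚ} (h : BddAbove (Oset f g)) :
    phiFun f g = ∅ := if_neg (by simpa using h)

/-- Forward direction. -/
lemma forward {f g f' g' : ℕ → ℚ} (hv : Valid f g) (hv' : Valid f' g')
    (hI : ¬ BddAbove (Oset f g ∩ Oset f' g')) :
    (Phi f g ∩ Phi f' g').Infinite := by
  have hu' : ¬ BddAbove (Oset f' g') := fun hb => hI (hb.mono inter_subset_right)
  set A : Set ℕ := {k | ((Oset f g ∩ Oset f' g') ∩ win k).Nonempty} with hA
  have hAinf : A.Infinite := by
    intro hfin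
    obtain ⟨n, hn⟩ := hfin.bddAbove
    obtain ⟨k, hk1, hk2⟩ := window_exists hI (n + 1)
    have : k ≤ n := hn hk2
    omega
  have hmem : ∀ k ∈ A,
      ((k, trd f' g' k, pre f g (L k (trd f' g' k))) : Code) ∈ Phi f g ∩ Phi f' g' := by
    intro k hk
    obtain ⟨x, hxI, hxw⟩ := hk
    constructor
    · exact Or.inr ⟨f', g', hv', hu', hI, rfl, ⟨x, ⟨hxI, hxw⟩⟩, rfl⟩
    · refine Or.inl ⟨rfl, ⟨x, hxI.2, hxw⟩, ?_⟩
      show (pre f g (L k (trd f' g' k))).length = L k (trd f' g' k)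
      exact List.length_ofFn
  have himg : ((fun k => ((k, trd f' g' k, pre f g (L k (trd f' g' k))) : Code)) '' A).Infinite :=
    hAinf.image (fun k1 _ k2 _ heq => congrArg Prod.fst heq)
  exact himg.mono (by rintro c ⟨k, hk, rfl⟩; exact hmem k hk)

lemma fix_finite (k : ℕ) (D : Finset (ℚ × ℚ)) :
    {c : Code | c.1 = k ∧ c.2.1 = D ∧ c.2.2.length = L c.1 c.2.1}.Finite := by
  apply Set.Finite.of_finite_image (f := fun c : Code => c.2.2)
  · apply (list_length_finite (L k D)).subset
    rintro l ⟨c, ⟨h1, h2, h3⟩, rfl⟩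
    simp only [mem_setOf_eq]
    rw [h3, h1, h2]
  · rintro ⟨k1, D1, j1⟩ ⟨h1, h2, h3⟩ ⟨k2, D2, j2⟩ ⟨h1', h2', h3'⟩ hcc
    simp only at h1 h2 h1' h2' hcc
    subst h1; subst h2; subst h1'; subst h2'; subst hcc
    rfl

/-- Backward direction. -/
lemma backward {f g f' g' : ℕ → ℚ} (hv : Valid f g) (hv' : Valid f' g')
    (hu : ¬ BddAbove (Oset f g)) (hu' : ¬ BddAbove (Oset f' g'))
    (hne : ∃ n, (f n, g n) ≠ (f' n, g' n))
    (hI : BddAbove (Oset f g ∩ Oset f' g')) :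
    (Phi f g ∩ Phi f' g').Finite := by
  obtain ⟨R, hR⟩ := hI
  set K : ℕ := ⌈R⌉₊ + 1 with hK
  have hwin : ∀ k : ℕ, ((Oset f g ∩ Oset f' g') ∩ win k).Nonempty → k < K := by
    rintro k ⟨x, hx1, hx2⟩
    have hxR : x ≤ R := hR hx1
    have h1 : (k : ℝ) < x := hx2.1
    have h2 : (k : ℝ) ≤ (⌈R⌉₊ : ℝ) := le_trans (le_of_lt (lt_of_lt_of_le h1 hxR)) (Nat.le_ceil R)
    have h3 : k ≤ ⌈R⌉₊ := by exact_mod_cast h2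
    omega
  obtain ⟨n₀, hn₀⟩ := hne
  set i₀ : ℕ := Nat.pair n₀ (Encodable.encode (f n₀, g n₀)) with hi₀
  have hxbne : xb f g i₀ ≠ xb f' g' i₀ := by
    have h1 : xb f g i₀ = true := (xb_true_iff f g i₀).mpr ⟨n₀, rfl⟩
    have h2 : xb f' g' i₀ ≠ true := by
      intro h2
      obtain ⟨n, hn⟩ := (xb_true_iff f' g' i₀).mp h2
      rw [hi₀, Nat.pair_eq_pair] at hn
      obtain ⟨rfl, henc⟩ := hn
      exact hn₀ (Encodable.encode_injective henc)
    rw [h1]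
    exact fun hc => h2 hc.symm
  set S1 : Set Code := {c | c.1 < K ∧ (c.2.1 = trd f g c.1 ∨ c.2.1 = trd f' g' c.1) ∧
    c.2.2.length = L c.1 c.2.1} with hS1def
  set S2 : Set Code := {c | L c.1 c.2.1 ≤ i₀ ∧ c.2.2 = pre f g (L c.1 c.2.1)} with hS2def
  have hS1 : S1.Finite := by
    have hsub : S1 ⊆ ⋃ k ∈ Finset.range K,
        ({c : Code | c.1 = k ∧ c.2.1 = trd f g k ∧ c.2.2.length = L c.1 c.2.1} ∪
         {c : Code | c.1 = k ∧ c.2.1 = trd f' g' k ∧ c.2.2.length = L c.1 c.2.1}) := by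
      rintro c ⟨hk, hD, hl⟩
      simp only [mem_iUnion, Finset.mem_range, exists_prop]
      refine ⟨c.1, hk, ?_⟩
      rcases hD with hD | hD
      · exact Or.inl ⟨rfl, hD, hl⟩
      · exact Or.inr ⟨rfl, hD, hl⟩
    apply Set.Finite.subset ?_ hsub
    apply Set.Finite.biUnion (Finset.range K).finite_toSet
    intro k _
    exact Set.Finite.union (fix_finite k (trd f g k)) (fix_finite k (trd f' g' k))
  have hS2 : S2.Finite := by
    apply Set.Finite.of_finite_image (f := fun c : Code => (c.1, c.2.1))
    · apply (encode_le_finite (ℕ × Finset (ℚ × ℚ)) i₀).subset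
      rintro p ⟨c, ⟨h1, _⟩, rfl⟩
      exact h1
    · rintro ⟨k1, D1, j1⟩ ⟨h1, h2⟩ ⟨k2, D2, j2⟩ ⟨h1', h2'⟩ hcc
      simp only [Prod.mk.injEq] at hcc
      obtain ⟨rfl, rfl⟩ := hcc
      simp only at h2 h2'
      rw [h2, h2']
  apply (hS1.union hS2).subset
  rintro c ⟨hcA, hcB⟩
  rcases hcA with hcA | hcA <;> rcases hcB with hcB | hcB
  · -- SUP, SUP
    obtain ⟨hD1, ⟨x, hx1, hx2⟩, hl1⟩ := hcA
    obtain ⟨hD2, hne2, hl2⟩ := hcB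
    left
    refine ⟨?_, Or.inl hD1, hl1⟩
    apply hwin
    have htr : Oset f g ∩ win c.1 = Oset f' g' ∩ win c.1 := by
      rw [← trd_union hv hu, ← trd_union hv' hu', ← hD1, ← hD2]
    have hx' : x ∈ Oset f' g' ∩ win c.1 := htr ▸ (show x ∈ Oset f g ∩ win c.1 from ⟨hx1, hx2⟩)
    exact ⟨x, ⟨hx1, hx'.1⟩, hx2⟩
  · -- SUP (f g), AD (f' g')
    obtain ⟨hD1, hne1, hl1⟩ := hcA
    obtain ⟨f₂, g₂, hv₂, hu₂, hI₂, hD2, ⟨x, hx1, hx2⟩, hj2⟩ := hcB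
    left
    refine ⟨?_, Or.inl hD1, hl1⟩
    apply hwin
    have htr : Oset f g ∩ win c.1 = Oset f₂ g₂ ∩ win c.1 := by
      rw [← trd_union hv hu, ← trd_union hv₂ hu₂, ← hD1, ← hD2]
    have hx' : x ∈ Oset f g ∩ win c.1 := htr ▸ (show x ∈ Oset f₂ g₂ ∩ win c.1 from ⟨hx1.2, hx2⟩)
    exact ⟨x, ⟨hx'.1, hx1.1⟩, hx2⟩
  · -- AD (f g), SUP (f' g')
    obtain ⟨f₂, g₂, hv₂, hu₂, hI₂, hD2, ⟨x, hx1, hx2⟩, hj1⟩ := hcA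
    obtain ⟨hD1, hne1, hl1⟩ := hcB
    left
    refine ⟨?_, Or.inr hD1, hl1⟩
    apply hwin
    have htr : Oset f' g' ∩ win c.1 = Oset f₂ g₂ ∩ win c.1 := by
      rw [← trd_union hv' hu', ← trd_union hv₂ hu₂, ← hD1, ← hD2]
    have hx' : x ∈ Oset f' g' ∩ win c.1 := htr ▸ (show x ∈ Oset f₂ g₂ ∩ win c.1 from ⟨hx1.2, hx2⟩)
    exact ⟨x, ⟨hx1.1, hx'.1⟩, hx2⟩
  · -- AD, AD
    obtain ⟨f₂, g₂, hv₂, hu₂, hI₂, hD2, hne2, hj1⟩ := hcA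
    obtain ⟨f₃, g₃, hv₃, hu₃, hI₃, hD3, hne3, hj2⟩ := hcB
    right
    refine ⟨?_, hj1⟩
    by_contra hgt
    push_neg at hgt
    have hpre : pre f g (L c.1 c.2.1) = pre f' g' (L c.1 c.2.1) := by rw [← hj1, ← hj2]
    have := (List.ofFn_inj.mp hpre)
    have heval : xb f g i₀ = xb f' g' i₀ := by
      have := congrFun this ⟨i₀, hgt⟩
      simpa using this
    exact hxbne heval

end S15

end Stmt15Aux

/-- If a symmetric relation `E` on `ω₂` is not representable by sets of
naturals (via infinite intersections), then no assignment `α ↦ O_α` of open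
subsets of the half line, each a locally finite union of rational open
intervals, can satisfy `(α,β) ∈ E ↔ O_α ∩ O_β` unbounded in `[0,∞)`. -/
theorem stmt15 (E : Set (Omega2 × Omega2))
    (hsymm : ∀ α β, (α, β) ∈ E → (β, α) ∈ E)
    (hrep : ¬ ∃ φ : Omega2 → Set ℕ,
      ∀ α β, (α, β) ∈ E ↔ (φ α ∩ φ β).Infinite)
    (a b : Omega2 → ℕ → ℚ)
    (hab : ∀ α n, a α n < b α n)
    (hloc : ∀ α n, b α n < a α (n + 1)) :
    ¬ ∀ α β, (α, β) ∈ E ↔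
        ¬ BddAbove ((⋃ n, Ioo ((a α n : ℝ)) ((b α n : ℝ))) ∩
                    (⋃ n, Ioo ((a β n : ℝ)) ((b β n : ℝ)))) := by
  intro h
  apply hrep
  classical
  refine ⟨fun γ => S15.phiFun (a γ) (b γ), fun α β => ?_⟩
  have hvα : S15.Valid (a α) (b α) := ⟨hab α, hloc α⟩
  have hvβ : S15.Valid (a β) (b β) := ⟨hab β, hloc β⟩
  rw [h α β]
  show ¬ BddAbove (S15.Oset (a α) (b α) ∩ S15.Oset (a β) (b β)) ↔
    (S15.phiFun (a α) (b α) ∩ S15.phiFun (a β) (b β)).Infinite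
  constructor
  · intro hI
    have huα : ¬ BddAbove (S15.Oset (a α) (b α)) := by
      intro hb; exact hI (hb.mono inter_subset_left)
    have huβ : ¬ BddAbove (S15.Oset (a β) (b β)) := by
      intro hb; exact hI (hb.mono inter_subset_right)
    rw [S15.phiFun_pos huα, S15.phiFun_pos huβ,
      ← Set.image_inter Encodable.encode_injective]
    exact (S15.forward hvα hvβ hI).image Encodable.encode_injective.injOn
  · intro hinf
    by_contra hI
    by_cases huα : BddAbove (S15.Oset (a α) (b α))
    · rw [S15.phiFun_neg huα] at hinf
      simp at hinf
    · by_cases huβ : BddAbove (S15.Oset (a β) (b β))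
      · rw [S15.phiFun_neg huβ] at hinf
        rw [Set.inter_empty] at hinf
        exact (Set.not_infinite.mpr Set.finite_empty) hinf
      · rw [S15.phiFun_pos huα, S15.phiFun_pos huβ,
          ← Set.image_inter Encodable.encode_injective] at hinf
        have hne : ∃ n, (a α n, b α n) ≠ (a β n, b β n) := by
          by_contra hc
          push_neg at hc
          have hfa : a α = a β := funext fun n => congrArg Prod.fst (hc n)
          have hfb : b α = b β := funext fun n => congrArg Prod.snd (hc n)
          apply huα
          have heq : S15.Oset (a α) (b α) ∩ S15.Oset (a β) (b β)
              = S15.Oset (a α) (b α) := by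
            rw [hfa, hfb, Set.inter_self]
          rw [← heq]; exact hI
        have hfin := S15.backward hvα hvβ huα huβ hne hI
        exact (Set.not_infinite.mpr (hfin.image _)) hinf
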